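/- arXiv:1212.1730 — 6 statements merged into one kernel-verified Lean document; each statement's English description precedes it below -/
import Mathlib

section
/- Let H be a finite-dimensional complex inner product space, σ₁ an invertible Hermitian p×p matrix, A : H → H a linear operator, X : H → H an invertible self-adjoint operator, and B : ℂᵖ → H a linear map satisfying the Lyapunov equation A X + X A* + B σ₁ B* = 0. Define S(λ) = I − B* X⁻¹ (λI − A)⁻¹ B σ₁ for λ not in the spectrum of A. Then for every λ not in the spectrum of A with −λ̄ also not in the spectrum of A, the symmetry relation S(−λ̄)* σ₁ S(λ) = σ₁ holds. -/
set_option maxHeartbeats 1000000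

open Matrix

/-- Symmetry of the transfer function: if the Lyapunov equation
`A X + X Aᴴ + B σ₁ Bᴴ = 0` holds, then `S(-λ̄)ᴴ σ₁ S(λ) = σ₁`. -/
theorem stmt0 {n p : ℕ}
    (σ₁ : Matrix (Fin p) (Fin p) ℂ) (A X : Matrix (Fin n) (Fin n) ℂ)
    (B : Matrix (Fin n) (Fin p) ℂ)
    (hσ₁ : σ₁.IsHermitian) (hσ₁inv : IsUnit σ₁)
    (hX : X.IsHermitian) (hXinv : IsUnit X)
    (hLyap : A * X + X * Aᴴ + B * σ₁ * Bᴴ = 0)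
    (S : ℂ → Matrix (Fin p) (Fin p) ℂ)
    (hS : ∀ l : ℂ, S l = 1 - Bᴴ * X⁻¹ * (l • 1 - A)⁻¹ * B * σ₁) :
    ∀ l : ℂ, l ∉ spectrum ℂ A → -(starRingEnd ℂ l) ∉ spectrum ℂ A →
      (S (-(starRingEnd ℂ l)))ᴴ * σ₁ * S l = σ₁ := by
  intro l hl hl'
  rw [spectrum.notMem_iff] at hl hl'
  have hA1 : IsUnit (l • (1 : Matrix (Fin n) (Fin n) ℂ) - A) := by
    simpa [Algebra.algebraMap_eq_smul_one] using hl
  have hA2 : IsUnit ((-(starRingEnd ℂ l)) • (1 : Matrix (Fin n) (Fin n) ℂ) - A) := by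
    simpa [Algebra.algebraMap_eq_smul_one] using hl'
  have hct : ((-(starRingEnd ℂ l)) • (1 : Matrix (Fin n) (Fin n) ℂ) - A)ᴴ
      = (-l) • (1 : Matrix (Fin n) (Fin n) ℂ) - Aᴴ := by
    simp [conjTranspose_sub, conjTranspose_smul]
  have hQunit : IsUnit ((-l) • (1 : Matrix (Fin n) (Fin n) ℂ) - Aᴴ) := by
    rw [← hct]
    rw [Matrix.isUnit_iff_isUnit_det] at hA2 ⊢
    rw [det_conjTranspose]
    exact hA2.star
  obtain ⟨R, hR⟩ : ∃ R : Matrix (Fin n) (Fin n) ℂ, R = (l • 1 - A)⁻¹ := ⟨_, rfl⟩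
  obtain ⟨Q, hQ⟩ : ∃ Q : Matrix (Fin n) (Fin n) ℂ, Q = ((-l) • 1 - Aᴴ)⁻¹ := ⟨_, rfl⟩
  have hMQ : (((-(starRingEnd ℂ l)) • (1 : Matrix (Fin n) (Fin n) ℂ) - A)⁻¹)ᴴ = Q := by
    rw [Matrix.conjTranspose_nonsing_inv, hct, hQ]
  have hXd : IsUnit X.det := (Matrix.isUnit_iff_isUnit_det X).mp hXinv
  have hXX : X * X⁻¹ = 1 := Matrix.mul_nonsing_inv X hXd
  have hXX' : X⁻¹ * X = 1 := Matrix.nonsing_inv_mul X hXd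
  have hXH : (X⁻¹)ᴴ = X⁻¹ := hX.inv
  have hRmul : (l • (1 : Matrix (Fin n) (Fin n) ℂ) - A) * R = 1 := by
    rw [hR]; exact Matrix.mul_nonsing_inv _ ((Matrix.isUnit_iff_isUnit_det _).mp hA1)
  have hQmul : Q * ((-l) • (1 : Matrix (Fin n) (Fin n) ℂ) - Aᴴ) = 1 := by
    rw [hQ]; exact Matrix.nonsing_inv_mul _ ((Matrix.isUnit_iff_isUnit_det _).mp hQunit)
  -- Lyapunov consequence
  have hBB : B * σ₁ * Bᴴ = -(A * X + X * Aᴴ) := by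
    linear_combination (norm := noncomm_ring) hLyap
  have hmid : X⁻¹ * (B * σ₁ * Bᴴ) * X⁻¹ = -(X⁻¹ * A + Aᴴ * X⁻¹) := by
    rw [hBB]
    calc X⁻¹ * (-(A * X + X * Aᴴ)) * X⁻¹
        = -(X⁻¹ * A * (X * X⁻¹) + (X⁻¹ * X) * (Aᴴ * X⁻¹)) := by noncomm_ring
      _ = -(X⁻¹ * A + Aᴴ * X⁻¹) := by rw [hXX, hXX']; noncomm_ring
  have hsplit : -(X⁻¹ * A + Aᴴ * X⁻¹)
      = X⁻¹ * (l • (1 : Matrix (Fin n) (Fin n) ℂ) - A)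
        + ((-l) • (1 : Matrix (Fin n) (Fin n) ℂ) - Aᴴ) * X⁻¹ := by
    rw [Matrix.mul_sub, Matrix.sub_mul, mul_smul_comm, smul_mul_assoc, one_mul,
      mul_one, neg_smul]
    abel
  have hkey : Q * (X⁻¹ * (B * σ₁ * Bᴴ) * X⁻¹) * R = Q * X⁻¹ + X⁻¹ * R := by
    rw [hmid, hsplit]
    calc Q * (X⁻¹ * (l • (1 : Matrix (Fin n) (Fin n) ℂ) - A)
          + ((-l) • (1 : Matrix (Fin n) (Fin n) ℂ) - Aᴴ) * X⁻¹) * R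
        = Q * X⁻¹ * ((l • 1 - A) * R)
          + (Q * ((-l) • 1 - Aᴴ)) * (X⁻¹ * R) := by noncomm_ring
      _ = Q * X⁻¹ + X⁻¹ * R := by rw [hRmul, hQmul]; noncomm_ring
  rw [hS l, hS (-(starRingEnd ℂ l))]
  have hSct : (1 - Bᴴ * X⁻¹ * ((-(starRingEnd ℂ l)) • (1 : Matrix (Fin n) (Fin n) ℂ) - A)⁻¹ * B * σ₁)ᴴ
      = 1 - σ₁ * Bᴴ * Q * X⁻¹ * B := by
    simp only [conjTranspose_sub, conjTranspose_mul, conjTranspose_one,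
      conjTranspose_conjTranspose, hMQ, hXH, hσ₁.eq, Matrix.mul_assoc]
  rw [hSct, ← hR]
  have hPT : σ₁ * Bᴴ * Q * X⁻¹ * B * σ₁ * (Bᴴ * X⁻¹ * R * B * σ₁)
      = σ₁ * Bᴴ * Q * X⁻¹ * B * σ₁ + σ₁ * (Bᴴ * X⁻¹ * R * B * σ₁) := by
    calc σ₁ * Bᴴ * Q * X⁻¹ * B * σ₁ * (Bᴴ * X⁻¹ * R * B * σ₁)
        = σ₁ * Bᴴ * (Q * (X⁻¹ * (B * σ₁ * Bᴴ) * X⁻¹) * R) * B * σ₁ := by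
          simp only [Matrix.mul_assoc]
      _ = σ₁ * Bᴴ * (Q * X⁻¹ + X⁻¹ * R) * B * σ₁ := by rw [hkey]
      _ = σ₁ * Bᴴ * Q * X⁻¹ * B * σ₁ + σ₁ * (Bᴴ * X⁻¹ * R * B * σ₁) := by
          simp only [Matrix.mul_add, Matrix.add_mul, Matrix.mul_assoc]
  calc (1 - σ₁ * Bᴴ * Q * X⁻¹ * B) * σ₁ * (1 - Bᴴ * X⁻¹ * R * B * σ₁)
      = σ₁ - σ₁ * Bᴴ * Q * X⁻¹ * B * σ₁ - σ₁ * (Bᴴ * X⁻¹ * R * B * σ₁)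
        + σ₁ * Bᴴ * Q * X⁻¹ * B * σ₁ * (Bᴴ * X⁻¹ * R * B * σ₁) := by
        rw [Matrix.sub_mul, Matrix.one_mul, Matrix.sub_mul, Matrix.mul_sub, Matrix.mul_sub,
          Matrix.mul_one, Matrix.mul_one]
        abel
    _ = σ₁ := by rw [hPT]; abel
end

section
/- Permanence of the Lyapunov equation: let H be a finite-dimensional complex Hilbert space, σ₁, σ₂ Hermitian p×p matrices with σ₁ invertible, γ a skew-Hermitian p×p matrix (γ + γ* = 0), A : H → H linear, and let B : ℝ → (ℂᵖ → H) and X : ℝ → (H → H) be differentiable functions satisfying d/dx (B(x) σ₁) = −A B(x) σ₂ − B(x) γ and d/dx X(x) = B(x) σ₂ B(x)*. If the Lyapunov equation A X(x₀) + X(x₀) A* + B(x₀) σ₁ B(x₀)* = 0 holds at some point x₀, then it holds for all x ∈ ℝ. -/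
open Matrix

attribute [local instance] Matrix.normedAddCommGroup Matrix.normedSpace

private noncomputable def mulCLM (n p q : ℕ) :
    Matrix (Fin n) (Fin p) ℂ →L[ℝ] Matrix (Fin p) (Fin q) ℂ →L[ℝ] Matrix (Fin n) (Fin q) ℂ :=
  LinearMap.toContinuousLinearMap
    { toFun := fun M => LinearMap.toContinuousLinearMap
        { toFun := fun N => M * N
          map_add' := fun a b => Matrix.mul_add M a b
          map_smul' := fun r N => Matrix.mul_smul M r N }
      map_add' := by
        intro a b
        apply ContinuousLinearMap.ext
        intro N
        simp [Matrix.add_mul]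
      map_smul' := by
        intro r a
        apply ContinuousLinearMap.ext
        intro N
        simp [Matrix.smul_mul] }

private lemma mulCLM_apply {n p q : ℕ} (M : Matrix (Fin n) (Fin p) ℂ)
    (N : Matrix (Fin p) (Fin q) ℂ) : mulCLM n p q M N = M * N := rfl

private lemma hasDerivAt_matmul {n p q : ℕ} {f : ℝ → Matrix (Fin n) (Fin p) ℂ}
    {g : ℝ → Matrix (Fin p) (Fin q) ℂ} {f' : Matrix (Fin n) (Fin p) ℂ}
    {g' : Matrix (Fin p) (Fin q) ℂ} {x : ℝ}
    (hf : HasDerivAt f f' x) (hg : HasDerivAt g g' x) :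
    HasDerivAt (fun y => f y * g y) (f' * g x + f x * g') x := by
  have hb := ((mulCLM n p q).isBoundedBilinearMap).hasFDerivAt (f x, g x)
  have := hb.comp_hasDerivAt x (hf.prodMk hg)
  rw [IsBoundedBilinearMap.deriv_apply, add_comm] at this
  exact this

private noncomputable def ctCLM (n p : ℕ) :
    Matrix (Fin n) (Fin p) ℂ →L[ℝ] Matrix (Fin p) (Fin n) ℂ :=
  LinearMap.toContinuousLinearMap
    { toFun := fun M => Mᴴ
      map_add' := fun a b => Matrix.conjTranspose_add a b
      map_smul' := by
        intro r M
        simp [Matrix.conjTranspose_smul] }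

private lemma hasDerivAt_ct {n p : ℕ} {f : ℝ → Matrix (Fin n) (Fin p) ℂ}
    {f' : Matrix (Fin n) (Fin p) ℂ} {x : ℝ} (hf : HasDerivAt f f' x) :
    HasDerivAt (fun y => (f y)ᴴ) f'ᴴ x := by
  have := (ctCLM n p).hasFDerivAt.comp_hasDerivAt x hf
  exact this

/-- Permanence of the Lyapunov equation along the vessel flow. -/
theorem stmt1 {n p : ℕ}
    (σ₁ σ₂ γ : Matrix (Fin p) (Fin p) ℂ)
    (hσ₁ : σ₁.IsHermitian) (hσ₁inv : IsUnit σ₁) (hσ₂ : σ₂.IsHermitian)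
    (hγ : γᴴ = -γ)
    (A : Matrix (Fin n) (Fin n) ℂ)
    (B : ℝ → Matrix (Fin n) (Fin p) ℂ) (X : ℝ → Matrix (Fin n) (Fin n) ℂ)
    (hB : ∀ x : ℝ, HasDerivAt (fun y => B y * σ₁) (-(A * B x * σ₂) - B x * γ) x)
    (hX : ∀ x : ℝ, HasDerivAt X (B x * σ₂ * (B x)ᴴ) x)
    (x₀ : ℝ)
    (h0 : A * X x₀ + X x₀ * Aᴴ + B x₀ * σ₁ * (B x₀)ᴴ = 0) :
    ∀ x : ℝ, A * X x + X x * Aᴴ + B x * σ₁ * (B x)ᴴ = 0 := by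
  have hdet : IsUnit σ₁.det := (Matrix.isUnit_iff_isUnit_det σ₁).mp hσ₁inv
  have hri : σ₁ * σ₁⁻¹ = 1 := Matrix.mul_nonsing_inv σ₁ hdet
  have hli : σ₁⁻¹ * σ₁ = 1 := Matrix.nonsing_inv_mul σ₁ hdet
  have hσ₁iH : (σ₁⁻¹)ᴴ = σ₁⁻¹ := hσ₁.inv.eq
  -- derivative of B itself
  have hBd : ∀ x : ℝ, HasDerivAt B ((-(A * B x * σ₂) - B x * γ) * σ₁⁻¹) x := by
    intro x
    have h := hasDerivAt_matmul (hB x) (hasDerivAt_const x σ₁⁻¹)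
    simp only [Matrix.mul_zero, add_zero] at h
    have heq : (fun y => B y * σ₁ * σ₁⁻¹) = B := by
      funext y; rw [Matrix.mul_assoc, hri, Matrix.mul_one]
    rwa [heq] at h
  set F : ℝ → Matrix (Fin n) (Fin n) ℂ :=
    fun x => A * X x + X x * Aᴴ + B x * σ₁ * (B x)ᴴ with hF
  have hFd : ∀ x : ℝ, HasDerivAt F 0 x := by
    intro x
    have h1 := hasDerivAt_matmul (hasDerivAt_const x A) (hX x)
    have h2 := hasDerivAt_matmul (hX x) (hasDerivAt_const x Aᴴ)
    have h3 := hasDerivAt_matmul (hB x) (hasDerivAt_ct (hBd x))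
    have h3' : HasDerivAt (fun y => B y * σ₁ * (B y)ᴴ)
        ((-(A * B x * σ₂) - B x * γ) * (B x)ᴴ +
          B x * σ₁ * ((-(A * B x * σ₂) - B x * γ) * σ₁⁻¹)ᴴ) x := h3
    have hsum := ((h1.add h2).add h3')
    have hz : (0 : Matrix (Fin n) (Fin n) ℂ) * X x + A * (B x * σ₂ * (B x)ᴴ) +
        (B x * σ₂ * (B x)ᴴ * Aᴴ + X x * 0) +
        ((-(A * B x * σ₂) - B x * γ) * (B x)ᴴ +
          B x * σ₁ * ((-(A * B x * σ₂) - B x * γ) * σ₁⁻¹)ᴴ) = 0 := by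
      have hexp : ((-(A * B x * σ₂) - B x * γ) * σ₁⁻¹)ᴴ
          = σ₁⁻¹ * (-(σ₂ * (B x)ᴴ * Aᴴ) + γ * (B x)ᴴ) := by
        rw [Matrix.conjTranspose_mul, hσ₁iH]
        congr 1
        rw [Matrix.conjTranspose_sub, Matrix.conjTranspose_neg, Matrix.conjTranspose_mul,
          Matrix.conjTranspose_mul, Matrix.conjTranspose_mul, hσ₂.eq, hγ]
        simp [Matrix.mul_assoc, Matrix.smul_mul, smul_smul, sub_eq_add_neg]
      rw [hexp]
      rw [show B x * σ₁ * (σ₁⁻¹ * (-(σ₂ * (B x)ᴴ * Aᴴ) + γ * (B x)ᴴ))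
          = B x * (σ₁ * σ₁⁻¹) * (-(σ₂ * (B x)ᴴ * Aᴴ) + γ * (B x)ᴴ) by
        simp [Matrix.mul_assoc]]
      rw [hri]
      simp only [Matrix.mul_one, Matrix.zero_mul, Matrix.mul_zero, zero_add, add_zero,
        Matrix.add_mul, Matrix.sub_mul, Matrix.neg_mul, Matrix.mul_add, Matrix.mul_neg,
        Matrix.smul_mul, Matrix.mul_assoc, sub_eq_add_neg]
      abel
    rw [hF]
    have := hsum
    rw [hz] at this
    exact this
  have hdiff : Differentiable ℝ F := fun x => (hFd x).differentiableAt
  have hderiv : ∀ x, deriv F x = 0 := fun x => (hFd x).deriv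
  intro x
  have hconst := is_const_of_deriv_eq_zero hdiff hderiv x x₀
  calc A * X x + X x * Aᴴ + B x * σ₁ * (B x)ᴴ = F x := rfl
    _ = F x₀ := hconst
    _ = 0 := h0
end

section
/- Derivative of X⁻¹B: assume the vessel equations d/dx(B σ₁) = −A B σ₂ − B γ, dX/dx = B σ₂ B*, the Lyapunov equation A X + X A* + B σ₁ B* = 0 for all x, X(x) invertible, and define γ*(x) = γ + σ₂ B(x)* X(x)⁻¹ B(x) σ₁ − σ₁ B(x)* X(x)⁻¹ B(x) σ₂. Then d/dx [X(x)⁻¹ B(x) σ₁] = A* X(x)⁻¹ B(x) σ₂ − X(x)⁻¹ B(x) γ*(x). -/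
open Matrix

attribute [local instance] Matrix.normedAddCommGroup Matrix.normedSpace

noncomputable def mulL (a b c : ℕ) :
    Matrix (Fin a) (Fin b) ℂ →L[ℝ] Matrix (Fin b) (Fin c) ℂ →L[ℝ] Matrix (Fin a) (Fin c) ℂ :=
  LinearMap.toContinuousLinearMap <|
  { toFun := fun M => LinearMap.toContinuousLinearMap
      { toFun := fun N => M * N
        map_add' := fun N₁ N₂ => Matrix.mul_add M N₁ N₂
        map_smul' := fun r N => (Matrix.mul_smul M r N) }
    map_add' := by intro M₁ M₂; ext N i j; simp [Matrix.add_mul]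
    map_smul' := by intro r M; ext N i j; simp [Matrix.smul_mul] }

@[simp] lemma mulL_apply {a b c : ℕ} (M : Matrix (Fin a) (Fin b) ℂ) (N : Matrix (Fin b) (Fin c) ℂ) :
    mulL a b c M N = M * N := rfl

lemma HasDerivAt.matMul {a b c : ℕ} {f : ℝ → Matrix (Fin a) (Fin b) ℂ}
    {g : ℝ → Matrix (Fin b) (Fin c) ℂ} {f' g'} {x : ℝ}
    (hf : HasDerivAt f f' x) (hg : HasDerivAt g g' x) :
    HasDerivAt (fun y => f y * g y) (f' * g x + f x * g') x := by
  have hfe : ∀ i k, HasDerivAt (fun y => f y i k) (f' i k) x :=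
    fun i k => hasDerivAt_pi.mp (hasDerivAt_pi.mp hf i) k
  have hge : ∀ k j, HasDerivAt (fun y => g y k j) (g' k j) x :=
    fun k j => hasDerivAt_pi.mp (hasDerivAt_pi.mp hg k) j
  apply hasDerivAt_pi.mpr
  intro i
  apply hasDerivAt_pi.mpr
  intro j
  simp only [Matrix.mul_apply, Matrix.add_apply, ← Finset.sum_add_distrib]
  apply HasDerivAt.fun_sum
  intro k _
  exact (hfe i k).mul (hge k j)

lemma diff_entry {a b : ℕ} {M : ℝ → Matrix (Fin a) (Fin b) ℂ} {x : ℝ}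
    (h : DifferentiableAt ℝ M x) (i : Fin a) (j : Fin b) :
    DifferentiableAt ℝ (fun y => M y i j) x := by
  have h1 : DifferentiableAt ℝ (fun y => M y i) x := differentiableAt_pi.mp h i
  exact differentiableAt_pi.mp h1 j

lemma diff_det {a : ℕ} {M : ℝ → Matrix (Fin a) (Fin a) ℂ} {x : ℝ}
    (h : ∀ i j, DifferentiableAt ℝ (fun y => M y i j) x) :
    DifferentiableAt ℝ (fun y => (M y).det) x := by
  simp only [Matrix.det_apply]
  apply DifferentiableAt.fun_sum
  intro σ _
  simp only [Units.smul_def, zsmul_eq_mul]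
  apply DifferentiableAt.const_mul
  exact DifferentiableAt.fun_finsetProd (fun i _ => h (σ i) i)

lemma diff_inv {a : ℕ} {M : ℝ → Matrix (Fin a) (Fin a) ℂ} {x : ℝ}
    (h : DifferentiableAt ℝ M x) (hU : IsUnit (M x)) :
    DifferentiableAt ℝ (fun y => (M y)⁻¹) x := by
  have hdet : DifferentiableAt ℝ (fun y => (M y).det) x := diff_det (fun i j => diff_entry h i j)
  have hdU : IsUnit (M x).det := (Matrix.isUnit_iff_isUnit_det _).mp hU
  have hinvdet : DifferentiableAt ℝ (fun y => Ring.inverse ((M y).det)) x :=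
    by have := (differentiableAt_inverse hdU).comp x hdet; exact this
  have hadj : DifferentiableAt ℝ (fun y => (M y).adjugate) x := by
    apply differentiableAt_pi.mpr
    intro i
    rw [differentiableAt_pi]
    intro j
    have : ∀ y, (M y).adjugate i j = ((M y).updateRow j (Pi.single i 1)).det := by
      intro y; rw [Matrix.adjugate_apply]
    simp only [this]
    apply diff_det
    intro a b
    by_cases hb : a = j
    · subst hb; simp only [Matrix.updateRow_self]; exact differentiableAt_const _
    · simp only [Matrix.updateRow_ne hb]; exact diff_entry h a b
  have : (fun y => (M y)⁻¹) = fun y => Ring.inverse ((M y).det) • (M y).adjugate := by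
    funext y; rw [Matrix.inv_def]
  rw [this]
  exact hinvdet.smul hadj

lemma hasDerivAt_matInv {a : ℕ} {M : ℝ → Matrix (Fin a) (Fin a) ℂ} {M' : Matrix (Fin a) (Fin a) ℂ}
    {x : ℝ} (h : HasDerivAt M M' x) (hU : ∀ y, IsUnit (M y)) :
    HasDerivAt (fun y => (M y)⁻¹) (-((M x)⁻¹ * M' * (M x)⁻¹)) x := by
  have hdiff : DifferentiableAt ℝ (fun y => (M y)⁻¹) x :=
    diff_inv h.differentiableAt (hU x)
  have hG := hdiff.hasDerivAt
  set G' := deriv (fun y => (M y)⁻¹) x with hG'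
  have hprod : HasDerivAt (fun y => M y * (M y)⁻¹) (M' * (M x)⁻¹ + M x * G') x :=
    h.matMul hG
  have hone : (fun y => M y * (M y)⁻¹) = fun _ => (1 : Matrix (Fin a) (Fin a) ℂ) := by
    funext y
    exact Matrix.mul_nonsing_inv _ ((Matrix.isUnit_iff_isUnit_det _).mp (hU y))
  rw [hone] at hprod
  have hz : M' * (M x)⁻¹ + M x * G' = 0 :=
    hprod.unique (hasDerivAt_const x _)
  have hGval : G' = -((M x)⁻¹ * M' * (M x)⁻¹) := by
    have h1 : M x * G' = -(M' * (M x)⁻¹) := by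
      rw [eq_neg_iff_add_eq_zero, add_comm]; exact hz
    have h2 := congrArg (fun N => (M x)⁻¹ * N) h1
    rw [← Matrix.mul_assoc, Matrix.nonsing_inv_mul _ ((Matrix.isUnit_iff_isUnit_det _).mp (hU x)),
      Matrix.one_mul] at h2
    rw [h2, Matrix.mul_neg, Matrix.mul_assoc]
  exact hG.congr_deriv hGval

/-- Derivative of `X⁻¹ B σ₁` for a vessel:
`d/dx [X⁻¹ B σ₁] = Aᴴ X⁻¹ B σ₂ − X⁻¹ B γ*`. -/
theorem stmt3 {n p : ℕ}
    (σ₁ σ₂ γ : Matrix (Fin p) (Fin p) ℂ)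
    (hσ₁ : σ₁.IsHermitian) (hσ₁inv : IsUnit σ₁) (hσ₂ : σ₂.IsHermitian)
    (hγ : γᴴ = -γ)
    (A : Matrix (Fin n) (Fin n) ℂ)
    (B : ℝ → Matrix (Fin n) (Fin p) ℂ) (X : ℝ → Matrix (Fin n) (Fin n) ℂ)
    (hB : ∀ x : ℝ, HasDerivAt (fun y => B y * σ₁) (-(A * B x * σ₂) - B x * γ) x)
    (hX : ∀ x : ℝ, HasDerivAt X (B x * σ₂ * (B x)ᴴ) x)
    (hLyap : ∀ x : ℝ, A * X x + X x * Aᴴ + B x * σ₁ * (B x)ᴴ = 0)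
    (hXh : ∀ x : ℝ, (X x).IsHermitian) (hXinv : ∀ x : ℝ, IsUnit (X x))
    (γs : ℝ → Matrix (Fin p) (Fin p) ℂ)
    (hγs : ∀ x : ℝ, γs x = γ + σ₂ * (B x)ᴴ * (X x)⁻¹ * B x * σ₁
        - σ₁ * (B x)ᴴ * (X x)⁻¹ * B x * σ₂) :
    ∀ x : ℝ, HasDerivAt (fun y => (X y)⁻¹ * B y * σ₁)
      (Aᴴ * (X x)⁻¹ * B x * σ₂ - (X x)⁻¹ * B x * γs x) x := by
  intro x
  set E := (X x)⁻¹ with hE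
  have hdU : IsUnit (X x).det := (Matrix.isUnit_iff_isUnit_det _).mp (hXinv x)
  have hE1 : X x * E = 1 := Matrix.mul_nonsing_inv _ hdU
  have hE2 : E * X x = 1 := Matrix.nonsing_inv_mul _ hdU
  have hGinv := hasDerivAt_matInv (hX x) hXinv
  have hD := hGinv.matMul (hB x)
  have hfun : (fun y => (X y)⁻¹ * B y * σ₁) = (fun y => (X y)⁻¹ * (B y * σ₁)) := by
    funext y; rw [Matrix.mul_assoc]
  rw [hfun]
  have hA : Aᴴ * E = -(E * A) - E * (B x * σ₁ * (B x)ᴴ) * E := by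
    have h1 : E * (A * X x + X x * Aᴴ + B x * σ₁ * (B x)ᴴ) * E = 0 := by
      rw [hLyap x]; simp
    have h2 : E * (A * X x + X x * Aᴴ + B x * σ₁ * (B x)ᴴ) * E
        = E * A * (X x * E) + (E * X x) * (Aᴴ * E) + E * (B x * σ₁ * (B x)ᴴ) * E := by
      noncomm_ring
    rw [h2, hE1, hE2, Matrix.mul_one, Matrix.one_mul] at h1
    rw [eq_sub_iff_add_eq, eq_neg_iff_add_eq_zero, ← h1]
    abel
  have heq : Aᴴ * E * B x * σ₂ - E * B x * γs x
      = -(E * (B x * σ₂ * (B x)ᴴ) * E) * (B x * σ₁) + E * (-(A * B x * σ₂) - B x * γ) := by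
    rw [hγs x, hA]
    simp only [Matrix.sub_mul, Matrix.add_mul, Matrix.mul_sub, Matrix.mul_add,
      Matrix.neg_mul, Matrix.mul_neg, Matrix.mul_assoc, sub_eq_add_neg, neg_add, neg_neg]
    abel
  rw [heq]
  exact hD
end

section
/- Second logarithmic derivative of tau for SL vessel parameters: for the Sturm–Liouville vessel parameters σ₁ = [[0,1],[1,0]], σ₂ = [[1,0],[0,0]], γ = [[0,0],[0,i]], writing H₀(x) = B(x)* X(x)⁻¹ B(x) = [[a, b],[b*, d]] (a 2×2 matrix with entries a, b, b*, d), the tau function of the vessel satisfies τ′/τ = a and τ″/τ = i(b* − b). In particular the terms involving the operator A cancel in the computation of (τ′/τ)′. -/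
open Matrix

attribute [local instance] Matrix.normedAddCommGroup Matrix.normedSpace

set_option linter.unusedSectionVars false
set_option maxHeartbeats 1000000

namespace SLVesselAux

variable {m k l : Type*} [Fintype m] [Fintype k] [Fintype l]
  [DecidableEq m] [DecidableEq k] [DecidableEq l]

theorem hasDerivAt_matrix {f : ℝ → Matrix m k ℂ} {f' : Matrix m k ℂ} {x : ℝ} :
    HasDerivAt f f' x ↔ ∀ i j, HasDerivAt (fun t => f t i j) (f' i j) x := by
  constructor
  · intro h i j
    exact (hasDerivAt_pi.1 ((hasDerivAt_pi (φ := f) (φ' := f')).1 h i) j)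
  · intro h
    exact hasDerivAt_pi.2 fun i => hasDerivAt_pi.2 fun j => h i j

theorem HasDerivAt.matmul {f : ℝ → Matrix m k ℂ} {g : ℝ → Matrix k l ℂ}
    {f' : Matrix m k ℂ} {g' : Matrix k l ℂ} {x : ℝ}
    (hf : HasDerivAt f f' x) (hg : HasDerivAt g g' x) :
    HasDerivAt (fun t => f t * g t) (f' * g x + f x * g') x := by
  rw [hasDerivAt_matrix] at hf hg ⊢
  intro i j
  simp only [Matrix.add_apply, Matrix.mul_apply]
  exact (HasDerivAt.fun_sum (fun p _ => ((hf i p).mul (hg p j)))).congr_deriv (by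
    rw [← Finset.sum_add_distrib])

theorem conjTransposeDeriv {f : ℝ → Matrix m k ℂ} {f' : Matrix m k ℂ} {x : ℝ}
    (hf : HasDerivAt f f' x) :
    HasDerivAt (fun t => (f t)ᴴ) f'ᴴ x := by
  rw [hasDerivAt_matrix] at hf ⊢
  intro i j
  simpa [Matrix.conjTranspose_apply] using (hf j i).star

variable {n : ℕ}

noncomputable def detCM (n : ℕ) : ContinuousMultilinearMap ℂ (fun _ : Fin n => (Fin n → ℂ)) ℂ :=
  MultilinearMap.mkContinuous
    (Matrix.detRowAlternating : ((Fin n → ℂ)) [⋀^Fin n]→ₗ[ℂ] ℂ).toMultilinearMap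
    (n.factorial) (by
      intro m
      have hdet : (Matrix.detRowAlternating : ((Fin n → ℂ)) [⋀^Fin n]→ₗ[ℂ] ℂ).toMultilinearMap m
          = (Matrix.of m).det := rfl
      rw [hdet, Matrix.det_apply]
      refine (norm_sum_le _ _).trans ?_
      have hterm : ∀ σ : Equiv.Perm (Fin n),
          ‖Equiv.Perm.sign σ • ∏ i, Matrix.of m (σ i) i‖ ≤ ∏ i, ‖m i‖ := by
        intro σ
        have h1 : ‖Equiv.Perm.sign σ • ∏ i, Matrix.of m (σ i) i‖
            = ‖∏ i, Matrix.of m (σ i) i‖ := by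
          rcases Int.units_eq_one_or (Equiv.Perm.sign σ) with h | h <;> simp [h]
        rw [h1]
        calc ‖∏ i, Matrix.of m (σ i) i‖ = ∏ i, ‖Matrix.of m (σ i) i‖ := by
              simp [norm_prod]
          _ ≤ ∏ i, ‖m (σ i)‖ := by
              refine Finset.prod_le_prod (fun i _ => norm_nonneg _) (fun i _ => ?_)
              exact norm_le_pi_norm (m (σ i)) i
          _ = ∏ i, ‖m i‖ := Equiv.prod_comp σ (fun i => ‖m i‖)
      refine (Finset.sum_le_sum (fun σ _ => hterm σ)).trans ?_
      rw [Finset.sum_const, Finset.card_univ]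
      simp [Fintype.card_perm, nsmul_eq_mul])

theorem hasDerivAt_det {X : ℝ → Matrix (Fin n) (Fin n) ℂ} {X' : Matrix (Fin n) (Fin n) ℂ} {x : ℝ}
    (h : HasDerivAt X X' x) :
    HasDerivAt (fun t => (X t).det) (∑ i, ((X x).updateRow i (X' i)).det) x := by
  have h' : ∀ i : Fin n, HasFDerivAt (fun t => X t i)
      (ContinuousLinearMap.smulRight (1 : ℝ →L[ℝ] ℝ) (X' i)) x :=
    fun i => (hasDerivAt_pi.1 h i).hasFDerivAt
  have H := (HasFDerivAt.multilinear_comp (ContinuousMultilinearMap.restrictScalars ℝ (detCM n))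
    (g := fun i t => X t i)
    (g' := fun i => ContinuousLinearMap.smulRight (1 : ℝ →L[ℝ] ℝ) (X' i)) h').hasDerivAt
  refine H.congr_deriv ?_
  simp only [ContinuousLinearMap.sum_apply, ContinuousLinearMap.comp_apply,
    ContinuousLinearMap.smulRight_apply, ContinuousLinearMap.one_apply, one_smul,
    ContinuousMultilinearMap.toContinuousLinearMap_apply]
  rfl

theorem sum_det_updateRow (M N : Matrix (Fin n) (Fin n) ℂ) :
    ∑ i, (M.updateRow i (N i)).det = Matrix.trace (M.adjugate * N) := by
  have key : ∀ i, (M.updateRow i (N i)).det = ∑ j, M.adjugate j i * N i j := by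
    intro i
    have h1 : (M.updateRow i (N i)).det = (Mᵀ.updateCol i (N i)).det := by
      rw [← Matrix.det_transpose, Matrix.updateCol_transpose]
    rw [h1, ← Matrix.cramer_apply, Matrix.cramer_eq_adjugate_mulVec, Matrix.mulVec,
      dotProduct]
    simp [← Matrix.adjugate_transpose, Matrix.transpose_apply]
  simp only [key, Matrix.trace, Matrix.diag, Matrix.mul_apply]
  rw [Finset.sum_comm]

theorem adjugate_eq_det_smul_inv {M : Matrix (Fin n) (Fin n) ℂ} (h : IsUnit M) :
    M.adjugate = M.det • M⁻¹ := by
  have hdet : IsUnit M.det := (Matrix.isUnit_iff_isUnit_det M).1 h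
  calc M.adjugate = 1 * M.adjugate := (one_mul _).symm
    _ = (M⁻¹ * M) * M.adjugate := by rw [Matrix.nonsing_inv_mul M hdet]
    _ = M⁻¹ * (M * M.adjugate) := by rw [Matrix.mul_assoc]
    _ = M⁻¹ * (M.det • 1) := by rw [Matrix.mul_adjugate]
    _ = M.det • M⁻¹ := by rw [Matrix.mul_smul, Matrix.mul_one]

/-- derivative of the determinant at an invertible point. -/
theorem hasDerivAt_det' {X : ℝ → Matrix (Fin n) (Fin n) ℂ} {X' : Matrix (Fin n) (Fin n) ℂ}
    {x : ℝ} (h : HasDerivAt X X' x) (hu : IsUnit (X x)) :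
    HasDerivAt (fun t => (X t).det)
      ((X x).det * Matrix.trace ((X x)⁻¹ * X')) x := by
  have := hasDerivAt_det h
  rw [sum_det_updateRow, adjugate_eq_det_smul_inv hu, Matrix.smul_mul,
    Matrix.trace_smul, smul_eq_mul] at this
  exact this

/-- derivative of the inverse. -/
theorem hasDerivAt_matrix_inv {X : ℝ → Matrix (Fin n) (Fin n) ℂ} {X' : Matrix (Fin n) (Fin n) ℂ}
    {x : ℝ} (h : HasDerivAt X X' x) (hu : ∀ t, IsUnit (X t)) :
    HasDerivAt (fun t => (X t)⁻¹) (-((X x)⁻¹ * X' * (X x)⁻¹)) x := by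
  have hdet : ∀ t, IsUnit (X t).det := fun t => (Matrix.isUnit_iff_isUnit_det _).1 (hu t)
  -- differentiability of adjugate, entrywise
  have hadj : ∀ i j : Fin n, ∃ d : ℂ, HasDerivAt (fun t => (X t).adjugate i j) d x := by
    intro i j
    have hrow : HasDerivAt (fun t => (X t).updateRow j (Pi.single i 1))
        (X'.updateRow j 0) x := by
      rw [hasDerivAt_matrix]
      intro a b
      rcases eq_or_ne a j with rfl | hne
      · simpa [Matrix.updateRow_apply] using hasDerivAt_const x ((Pi.single i 1 : Fin n → ℂ) b)
      · simpa [Matrix.updateRow_apply, hne] using hasDerivAt_matrix.1 h a b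
    have hdd := hasDerivAt_det hrow
    exact ⟨_, hdd.congr_of_eventuallyEq
      (Filter.Eventually.of_forall fun t => Matrix.adjugate_apply (X t) i j)⟩
  choose D hD using hadj
  have hAdj : HasDerivAt (fun t => (X t).adjugate) (Matrix.of D) x :=
    hasDerivAt_matrix.2 fun i j => hD i j
  -- differentiability of det⁻¹
  have hdet' := HasDerivAt.scomp (𝕜 := ℝ) x (_root_.hasDerivAt_inv (hdet x).ne_zero) (hasDerivAt_det' h (hu x))
  -- the inverse is (det)⁻¹ • adjugate
  have hfun : (fun t => (X t)⁻¹) = fun t => ((X t).det)⁻¹ • (X t).adjugate := by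
    funext t
    rw [Matrix.inv_def, Ring.inverse_eq_inv']
  have hE0 : HasDerivAt (fun t => (X t)⁻¹)
      (((X x).det)⁻¹ • (Matrix.of D)
        + (((X x).det * ((X x)⁻¹ * X').trace) • -(((X x).det ^ 2)⁻¹)) • (X x).adjugate) x := by
    rw [hfun]
    exact HasDerivAt.smul hdet' hAdj
  obtain ⟨E, hE⟩ : ∃ E, HasDerivAt (fun t => (X t)⁻¹) E x := ⟨_, hE0⟩
  -- pin down E using K * X = 1
  have hone : (fun t => (X t)⁻¹ * X t) = fun _ => (1 : Matrix (Fin n) (Fin n) ℂ) := by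
    funext t
    exact Matrix.nonsing_inv_mul (X t) (hdet t)
  have hprod : HasDerivAt (fun t => (X t)⁻¹ * X t) (E * X x + (X x)⁻¹ * X') x :=
    HasDerivAt.matmul hE h
  have hzero : E * X x + (X x)⁻¹ * X' = 0 := by
    have := hasDerivAt_const x (1 : Matrix (Fin n) (Fin n) ℂ)
    rw [hone] at hprod
    exact hprod.unique this
  have hE' : E = -((X x)⁻¹ * X' * (X x)⁻¹) := by
    have h1 : E * X x = -((X x)⁻¹ * X') := by
      rw [eq_neg_iff_add_eq_zero]; exact hzero
    have h2 : E * X x * (X x)⁻¹ = -((X x)⁻¹ * X') * (X x)⁻¹ := by rw [h1]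
    rwa [Matrix.mul_assoc, Matrix.mul_nonsing_inv (X x) (hdet x), Matrix.mul_one,
      Matrix.neg_mul] at h2
  rwa [hE'] at hE

end SLVesselAux

open SLVesselAux

/-- For the Sturm–Liouville vessel parameters, with `H₀ = Bᴴ X⁻¹ B = [[a,b],[b*,d]]`,
the tau function satisfies `τ′/τ = a` and `τ″/τ = i (b* − b)`. -/
theorem stmt6 {n : ℕ}
    (σ₁ σ₂ γ : Matrix (Fin 2) (Fin 2) ℂ)
    (hσ₁ : σ₁ = !![0, 1; 1, 0]) (hσ₂ : σ₂ = !![1, 0; 0, 0])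
    (hγ : γ = !![0, 0; 0, Complex.I])
    (A : Matrix (Fin n) (Fin n) ℂ)
    (B : ℝ → Matrix (Fin n) (Fin 2) ℂ) (X : ℝ → Matrix (Fin n) (Fin n) ℂ)
    (hB : ∀ x : ℝ, HasDerivAt (fun y => B y * σ₁) (-(A * B x * σ₂) - B x * γ) x)
    (hX : ∀ x : ℝ, HasDerivAt X (B x * σ₂ * (B x)ᴴ) x)
    (hLyap : ∀ x : ℝ, A * X x + X x * Aᴴ + B x * σ₁ * (B x)ᴴ = 0)
    (hXh : ∀ x : ℝ, (X x).IsHermitian) (hXinv : ∀ x : ℝ, IsUnit (X x))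
    (x₀ : ℝ)
    (τ : ℝ → ℂ) (hτ : ∀ x : ℝ, τ x = ((X x₀)⁻¹ * X x).det)
    (H₀ : ℝ → Matrix (Fin 2) (Fin 2) ℂ)
    (hH₀ : ∀ x : ℝ, H₀ x = (B x)ᴴ * (X x)⁻¹ * B x) :
    ∀ x : ℝ, HasDerivAt τ (τ x * H₀ x 0 0) x ∧
      HasDerivAt (deriv τ) (Complex.I * (H₀ x 1 0 - H₀ x 0 1) * τ x) x := by
  have hdetu : ∀ t, IsUnit ((X t).det) := fun t => (Matrix.isUnit_iff_isUnit_det _).1 (hXinv t)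
  -- trace identity : trace (X⁻¹ * (B σ₂ Bᴴ)) = H₀ 0 0
  have htrace : ∀ t : ℝ, Matrix.trace ((X t)⁻¹ * (B t * σ₂ * (B t)ᴴ)) = H₀ t 0 0 := by
    intro t
    have h1 : (X t)⁻¹ * (B t * σ₂ * (B t)ᴴ) = ((X t)⁻¹ * B t * σ₂) * (B t)ᴴ := by
      simp only [Matrix.mul_assoc]
    rw [h1, Matrix.trace_mul_comm]
    have h2 : (B t)ᴴ * ((X t)⁻¹ * B t * σ₂) = H₀ t * σ₂ := by
      rw [hH₀]; simp only [Matrix.mul_assoc]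
    rw [h2, hσ₂, Matrix.trace_fin_two]
    simp [Matrix.mul_apply, Fin.sum_univ_two]
  -- first derivative
  have hτ' : ∀ t : ℝ, HasDerivAt τ (τ t * H₀ t 0 0) t := by
    intro t
    have hfun : τ = fun s => ((X x₀)⁻¹).det * (X s).det := by
      funext s; rw [hτ, Matrix.det_mul]
    have hd := (hasDerivAt_det' (hX t) (hXinv t)).const_mul (((X x₀)⁻¹).det)
    rw [← hfun] at hd
    have hval : ((X x₀)⁻¹).det * ((X t).det * Matrix.trace ((X t)⁻¹ * (B t * σ₂ * (B t)ᴴ)))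
        = τ t * H₀ t 0 0 := by
      rw [htrace t, hτ, Matrix.det_mul, mul_assoc]
    rwa [hval] at hd
  intro x
  refine ⟨hτ' x, ?_⟩
  -- second derivative
  have hderiv : deriv τ = fun t => τ t * H₀ t 0 0 := funext fun t => (hτ' t).deriv
  rw [hderiv]
  -- derivative of B
  have hσ₁σ₁ : σ₁ * σ₁ = 1 := by
    rw [hσ₁]; ext i j; fin_cases i <;> fin_cases j <;>
      simp [Matrix.mul_apply, Fin.sum_univ_two, Matrix.one_apply]
  set Bx := B x with hBx
  set Kx := (X x)⁻¹ with hKx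
  set Bd : Matrix (Fin n) (Fin 2) ℂ := (-(A * Bx * σ₂) - Bx * γ) * σ₁ with hBd
  have hB' : HasDerivAt B Bd x := by
    have h1 := HasDerivAt.matmul (hB x) (hasDerivAt_const x σ₁)
    have h2 : (fun t => (B t * σ₁) * σ₁) = B := by
      funext t; rw [Matrix.mul_assoc, hσ₁σ₁, Matrix.mul_one]
    rw [h2] at h1
    simpa using h1
  have hK' : HasDerivAt (fun t => (X t)⁻¹) (-(Kx * (Bx * σ₂ * Bxᴴ) * Kx)) x :=
    hasDerivAt_matrix_inv (hX x) hXinv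
  have hBH : HasDerivAt (fun t => (B t)ᴴ) Bdᴴ x := conjTransposeDeriv hB'
  -- derivative of H₀
  set D : Matrix (Fin 2) (Fin 2) ℂ :=
    (Bdᴴ * Kx + Bxᴴ * (-(Kx * (Bx * σ₂ * Bxᴴ) * Kx))) * Bx + (Bxᴴ * Kx) * Bd with hDdef
  have hH : HasDerivAt (fun t => (B t)ᴴ * (X t)⁻¹ * B t) D x :=
    HasDerivAt.matmul (HasDerivAt.matmul hBH hK') hB'
  have hH00 : HasDerivAt (fun t => H₀ t 0 0) (D 0 0) x := by
    have hfun : (fun t => H₀ t 0 0) = fun t => ((B t)ᴴ * (X t)⁻¹ * B t) 0 0 := by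
      funext t; rw [hH₀]
    rw [hfun]
    exact hasDerivAt_matrix.1 hH 0 0
  have hmain := (hτ' x).mul hH00
  -- compute D 0 0
  have hσ₁H : σ₁ᴴ = σ₁ := by
    rw [hσ₁]; ext i j; fin_cases i <;> fin_cases j <;> simp [Matrix.conjTranspose_apply]
  have hσ₂H : σ₂ᴴ = σ₂ := by
    rw [hσ₂]; ext i j; fin_cases i <;> fin_cases j <;> simp [Matrix.conjTranspose_apply]
  have hγH : γᴴ = !![0, 0; 0, -Complex.I] := by
    rw [hγ]; ext i j; fin_cases i <;> fin_cases j <;> simp [Matrix.conjTranspose_apply]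
  have hBdH : Bdᴴ = σ₁ * (-(σ₂ * (Bxᴴ * Aᴴ)) - γᴴ * Bxᴴ) := by
    rw [hBd]
    simp only [Matrix.conjTranspose_mul, Matrix.conjTranspose_sub, Matrix.conjTranspose_neg,
      hσ₁H, hσ₂H, Matrix.mul_assoc]
  have hHx : H₀ x = Bxᴴ * Kx * Bx := hH₀ x
  set P : Matrix (Fin 2) (Fin 2) ℂ := Bxᴴ * (Aᴴ * (Kx * Bx)) with hP
  set Q : Matrix (Fin 2) (Fin 2) ℂ := Bxᴴ * (Kx * (A * Bx)) with hQ
  have hDeq : D = (-(σ₁ * (σ₂ * P)) - σ₁ * (γᴴ * (H₀ x)))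
      - (H₀ x) * (σ₂ * (H₀ x)) + (-(Q * (σ₂ * σ₁)) - (H₀ x) * (γ * σ₁)) := by
    rw [hDdef, hBdH, hHx, hBd, hP, hQ]
    simp only [Matrix.mul_assoc, Matrix.sub_mul, Matrix.mul_sub, Matrix.add_mul,
      Matrix.mul_add, Matrix.neg_mul, Matrix.mul_neg, neg_neg]
    abel
  have hD00 : D 0 0 = Complex.I * H₀ x 1 0 - Complex.I * H₀ x 0 1 - H₀ x 0 0 * H₀ x 0 0 := by
    rw [hDeq, hγH, hσ₁, hσ₂, hγ]
    simp [Matrix.add_apply, Matrix.sub_apply, Matrix.neg_apply, Matrix.mul_apply,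
      Matrix.vecMul, dotProduct, Fin.sum_univ_two]
    ring
  have hval : τ x * H₀ x 0 0 * H₀ x 0 0 + τ x * D 0 0
      = Complex.I * (H₀ x 1 0 - H₀ x 0 1) * τ x := by
    rw [hD00]; ring
  rwa [hval] at hmain
end

section
/- Gelfand–Levitan equation from vessel structure: let f : ℝ≥0 × ℝ≥0 → ℂ and suppose there exist a Hilbert space H, a continuous family B : ℝ≥0 → (ℂ² → H), and invertible self-adjoint operators X(x) with X(0) = I, such that f(x,y) = e₁* B(x)* B(y) e₁ (where e₁ = (1,0)ᵀ) and X(x) = I + ∫₀ˣ B(t) σ₂ B(t)* dt with σ₂ = [[1,0],[0,0]]. Define K(x,y) = − e₁* B(x)* X(x)⁻¹ B(y) e₁. Then the Gelfand–Levitan equation f(x,y) + K(x,y) + ∫₀ˣ K(x,t) f(t,y) dt = 0 holds for all 0 ≤ y ≤ x. -/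
open MeasureTheory

/-- Gelfand–Levitan equation from the vessel structure: with
`f(x,y) = ⟪B(x)e₁, B(y)e₁⟫`, `X(x) = I + ∫₀ˣ (B(t)e₁)(B(t)e₁)* dt` invertible, and
`K(x,y) = −⟪B(x)e₁, X(x)⁻¹ B(y)e₁⟫`, one has
`f(x,y) + K(x,y) + ∫₀ˣ K(x,t) f(t,y) dt = 0` for `0 ≤ y ≤ x`. -/
theorem stmt12 {H : Type*} [NormedAddCommGroup H] [InnerProductSpace ℂ H]
    [CompleteSpace H]
    (B : ℝ → (EuclideanSpace ℂ (Fin 2) →L[ℂ] H)) (hB : Continuous B)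
    (e₁ : EuclideanSpace ℂ (Fin 2)) (he₁ : e₁ = EuclideanSpace.single 0 1)
    (X Xinv : ℝ → (H →L[ℂ] H))
    (hX : ∀ x : ℝ, X x = 1 + ∫ t in (0:ℝ)..x,
        (innerSL ℂ (B t e₁)).smulRight (B t e₁))
    (hXinv : ∀ x : ℝ, X x * Xinv x = 1 ∧ Xinv x * X x = 1)
    (f K : ℝ → ℝ → ℂ)
    (hf : ∀ x y : ℝ, f x y = inner ℂ (B x e₁) (B y e₁))
    (hK : ∀ x y : ℝ, K x y = -inner ℂ (B x e₁) (Xinv x (B y e₁))) :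
    ∀ x y : ℝ, 0 ≤ y → y ≤ x →
      f x y + K x y + ∫ t in (0:ℝ)..x, K x t * f t y = 0 := by
  intro x y hy hyx
  set g : ℝ → H := fun t => B t e₁ with hg
  have hgc : Continuous g := hB.clm_apply continuous_const
  set T : ℝ → (H →L[ℂ] H) := fun t => (innerSL ℂ (g t)).smulRight (g t) with hT
  have hTc : Continuous T := by
    have : T = fun t => ContinuousLinearMap.smulRightL ℂ H H (innerSL ℂ (g t)) (g t) := rfl
    rw [this]
    exact (((ContinuousLinearMap.smulRightL ℂ H H).continuous.comp
      ((innerSL ℂ).continuous.comp hgc)).clm_apply hgc)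
  set u : H := B x e₁
  set v : H := B y e₁
  set L : H →L[ℂ] ℂ := (innerSL ℂ u).comp (Xinv x) with hL
  have hTv : ∀ w : H, Continuous fun t => T t w := fun w => hTc.clm_apply continuous_const
  have key1 : (∫ t in (0:ℝ)..x, T t) v = ∫ t in (0:ℝ)..x, T t v :=
    ContinuousLinearMap.intervalIntegral_apply (hTc.intervalIntegrable 0 x) v
  have key2 : ∫ t in (0:ℝ)..x, L (T t v) = L (∫ t in (0:ℝ)..x, T t v) :=
    L.intervalIntegral_comp_comm ((hTv v).intervalIntegrable 0 x)
  have hint : (∫ t in (0:ℝ)..x, K x t * f t y) = - L ((X x) v - v) := by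
    have : (fun t => K x t * f t y) = fun t => -(L (T t v)) := by
      funext t
      simp only [hK, hf, hL, hT, ContinuousLinearMap.comp_apply,
        ContinuousLinearMap.smulRight_apply, innerSL_apply_apply, _root_.map_smul, inner_smul_right, smul_eq_mul]
      ring
    rw [this, intervalIntegral.integral_neg, key2, ← key1]
    congr 2
    have := hX x
    rw [this]
    simp
  have hinv : Xinv x ((X x) v) = v := by
    have h2 := (hXinv x).2
    have : (Xinv x * X x) v = v := by rw [h2]; rfl
    simpa using this
  rw [hint, hf, hK]
  simp only [hL, ContinuousLinearMap.comp_apply, innerSL_apply_apply, map_sub]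
  rw [hinv]
  ring
end

section
/- Inverse via the transformed kernel: let H = L²(ω) for a positive measure ω on ℝ, let φ(x,·) ∈ H be a family with φ(0,λ) = 1 and suppose Y(x) defined by (Y(x)g)(λ) = g(λ) − ∫₀ˣ φ(y,λ) (∫ φ(y,μ) g(μ) dω(μ)) dy and X(x) defined by (X(x)g)(λ) = g(λ) + ∫₀ˣ cos(√λ y) (∫ cos(√μ y) g(μ) dω(μ)) dy satisfy X(x) φ(x,·) = cos(√· x) and Y(x) cos(√· x) = φ(x,·) for all x ≥ 0. Then d/dx [X(x) Y(x)] = 0, and consequently X(x) Y(x) = I for all x ≥ 0, i.e., Y(x) = X(x)⁻¹. -/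
open MeasureTheory

/-- `Y(x)` is the inverse of `X(x)`: if `dX/dx = c_x c_x*`, `dY/dx = −φ_x φ_x*`,
`X(0) = Y(0) = I`, `Y(x)` self-adjoint, `X(x) φ_x = c_x` and `Y(x) c_x = φ_x`, then
`d/dx (X(x)Y(x)) = 0` and consequently `X(x) Y(x) = I` for all `x ≥ 0`. -/
theorem stmt14 {H : Type*} [NormedAddCommGroup H] [InnerProductSpace ℂ H]
    [CompleteSpace H]
    (c φ : ℝ → H) (hc : Continuous c) (hφ : Continuous φ)
    (X Y : ℝ → (H →L[ℂ] H))
    (hX0 : X 0 = 1) (hY0 : Y 0 = 1)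
    (hXd : ∀ x : ℝ, HasDerivAt X ((innerSL ℂ (c x)).smulRight (c x)) x)
    (hYd : ∀ x : ℝ, HasDerivAt Y (-(innerSL ℂ (φ x)).smulRight (φ x)) x)
    (hYsa : ∀ x : ℝ, IsSelfAdjoint (Y x))
    (hXφ : ∀ x : ℝ, 0 ≤ x → X x (φ x) = c x)
    (hYc : ∀ x : ℝ, 0 ≤ x → Y x (c x) = φ x) :
    ∀ x : ℝ, 0 ≤ x →
      HasDerivAt (fun s => X s * Y s) 0 x ∧ X x * Y x = 1 := by
  have hD : ∀ x : ℝ, 0 ≤ x → HasDerivAt (fun s => X s * Y s) 0 x := by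
    intro x hx
    have h := (hXd x).mul (hYd x)
    have hzero : ((innerSL ℂ (c x)).smulRight (c x)) * Y x
        + X x * (-(innerSL ℂ (φ x)).smulRight (φ x)) = 0 := by
      ext g
      have h1 : (inner ℂ (c x) (Y x g) : ℂ) = inner ℂ (φ x) g := by
        rw [← (hYsa x).adjoint_eq, ContinuousLinearMap.adjoint_inner_right,
          hYc x hx]
      simp only [ContinuousLinearMap.add_apply, ContinuousLinearMap.mul_apply,
        ContinuousLinearMap.smulRight_apply, ContinuousLinearMap.neg_apply,
        innerSL_apply_apply, ContinuousLinearMap.zero_apply, map_neg, _root_.map_smul, h1]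
      rw [hXφ x hx]
      simp
    rwa [hzero] at h
  intro x hx
  refine ⟨hD x hx, ?_⟩
  have hcont : ContinuousOn (fun s => X s * Y s) (Set.Icc 0 x) := by
    apply Continuous.continuousOn
    exact (continuous_iff_continuousAt.2 fun s => (hXd s).continuousAt).mul
      (continuous_iff_continuousAt.2 fun s => (hYd s).continuousAt)
  have := constant_of_has_deriv_right_zero hcont
    (fun s hs => ((hD s hs.1).hasDerivWithinAt)) x (Set.mem_Icc.2 ⟨hx, le_rfl⟩)
  simpa [hX0, hY0] using this
end
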